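/- arXiv:1708.05783 — 2 statements merged into one kernel-verified Lean document; each statement's English description precedes it below -/
import Mathlib

section
/- Let n ≥ 2 be a natural number and let L, μ, κ be real numbers with L ≠ 1, μ = 2(n-1)L/(1-L), κ = μ(1 - L(n+1)), and suppose (1-2n)κμ - nμ² + 2(n-1)(κ+μ) = 0 and μ ≠ 0. Then either (L = 1/(n+1), μ = (2n-2)/n, κ = 0) or (L = 1/n, μ = 2, κ = -2/n). -/
theorem stmt_2 (n : ℕ) (hn : 2 ≤ n) (L μ κ : ℝ) (hL : L ≠ 1)
    (hμ : μ = 2*((n:ℝ)-1)*L/(1-L)) (hκ : κ = μ*(1 - L*((n:ℝ)+1)))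
    (heq : (1-2*(n:ℝ))*κ*μ - (n:ℝ)*μ^2 + 2*((n:ℝ)-1)*(κ+μ) = 0)
    (hμ0 : μ ≠ 0) :
    (L = 1/((n:ℝ)+1) ∧ μ = (2*(n:ℝ)-2)/(n:ℝ) ∧ κ = 0) ∨
    (L = 1/(n:ℝ) ∧ μ = 2 ∧ κ = -2/(n:ℝ)) := by
  set N : ℝ := (n:ℝ) with hNdef
  have hN : (2:ℝ) ≤ N := by rw [hNdef]; exact_mod_cast hn
  have hN0 : N ≠ 0 := by linarith
  have hN1 : N - 1 ≠ 0 := by intro h; linarith [sub_eq_zero.mp h]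
  have hNp1 : N + 1 ≠ 0 := by linarith
  have h1L : (1:ℝ) - L ≠ 0 := fun h => hL (by linarith [sub_eq_zero.mp h])
  have hL0 : L ≠ 0 := by
    intro h
    apply hμ0
    rw [hμ, h]; ring
  subst hκ
  subst hμ
  rw [div_ne_zero_iff] at hμ0
  field_simp at heq
  have key : (N*L - 1) * ((N+1)*L - 1) = 0 := by
    have h4 : (8*(N-1)^2*L*(1-L)^3) * ((N*L - 1) * ((N+1)*L - 1)) = 0 := by
      linear_combination (1-L)^3 * heq
    rcases mul_eq_zero.mp h4 with h | h
    · exfalso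
      have : (8:ℝ)*(N-1)^2*L*(1-L)^3 ≠ 0 := by
        apply mul_ne_zero (mul_ne_zero (mul_ne_zero (by norm_num) (pow_ne_zero _ hN1)) hL0)
        exact pow_ne_zero _ h1L
      exact this h
    · exact h
  rcases mul_eq_zero.mp key with h | h
  · right
    have hLeq : L = 1/N := by field_simp; linarith [sub_eq_zero.mp h]
    subst hLeq
    refine ⟨rfl, ?_, ?_⟩
    · field_simp
      try ring
    · field_simp
      try ring
  · left
    have hLeq : L = 1/(N+1) := by field_simp; linarith [sub_eq_zero.mp h]
    subst hLeq
    refine ⟨rfl, ?_, ?_⟩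
    · field_simp
      try ring
      simp [hN0]
    · field_simp
      try ring
end

section
/- Let κ, μ, λ be real numbers with κ = 1 - λ², μ = 2(λ-1), and (1-2n)κμ - nμ² + 2(n-1)(κ+μ) = 0 for a natural number n ≥ 2, with λ ≠ 1. Then λ = n/(2n-1). -/
theorem stmt_6 (n : ℕ) (hn : 2 ≤ n) (κ μ l : ℝ)
    (hκ : κ = 1 - l^2) (hμ : μ = 2*(l-1))
    (heq : (1-2*(n:ℝ))*κ*μ - (n:ℝ)*μ^2 + 2*((n:ℝ)-1)*(κ+μ) = 0)
    (hl : l ≠ 1) : l = (n:ℝ)/(2*(n:ℝ)-1) := by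
  subst hκ hμ
  have hn2 : (2:ℝ) ≤ (n:ℝ) := by exact_mod_cast hn
  have hd : 2*(n:ℝ)-1 ≠ 0 := by nlinarith
  have h1 : l - 1 ≠ 0 := sub_ne_zero.mpr hl
  have key : (l-1)^2 * ((4*(n:ℝ)-2)*l - 2*(n:ℝ)) = 0 := by linear_combination heq
  have := mul_eq_zero.mp key
  rcases this with h | h
  · exact absurd (pow_eq_zero_iff (by norm_num) |>.mp h) h1
  · field_simp
    rw [eq_div_iff (by linarith)]
    linear_combination h / 2
end
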